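/- Let g: ℝ → ℝ be continuous and bounded, with g(x) ≥ δ > 0 for x > K and g(x) ≤ -δ for x < -K. Let X be a random variable with density ρ(x) = C·e^{-G(x)} where G(x) = ∫₀ˣ g(t)dt and C normalizes ρ. Then for every ω ∈ ℝ, E[e^{jωX} g(X)] = jω·E[e^{jωX}], i.e., the Gibbs distribution satisfies the characteristic-function functional equation E[g(X)cos(ωX)] = -ω·E[sin(ωX)] and E[g(X)sin(ωX)] = ω·E[cos(ωX)]. -/

import Mathlib

open MeasureTheory Real Set Filter Topology

noncomputable def Gaux (g : ℝ → ℝ) (x : ℝ) : ℝ := ∫ t in (0:ℝ)..x, g t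

noncomputable def Daux (g : ℝ → ℝ) (C x : ℝ) : ℝ := C * Real.exp (-(Gaux g x))

lemma gibbs_main (g : ℝ → ℝ) (gmax δ K : ℝ) (hg : Continuous g)
    (hgb : ∀ x, |g x| ≤ gmax) (hδ : 0 < δ) (hK : 0 < K)
    (hpos : ∀ x > K, δ ≤ g x) (hneg : ∀ x < -K, g x ≤ -δ) (C ω : ℝ) :
    (∫ x : ℝ, g x * Real.cos (ω * x) * Daux g C x) =
      -ω * ∫ x : ℝ, Real.sin (ω * x) * Daux g C x ∧
    (∫ x : ℝ, g x * Real.sin (ω * x) * Daux g C x) =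
      ω * ∫ x : ℝ, Real.cos (ω * x) * Daux g C x := by
  have hgmax0 : 0 ≤ gmax := (abs_nonneg (g 0)).trans (hgb 0)
  -- derivative of G
  have hGderiv : ∀ x, HasDerivAt (Gaux g) (g x) x :=
    fun x => (hg.integral_hasStrictDerivAt 0 x).hasDerivAt
  have hGcont : Continuous (Gaux g) :=
    continuous_iff_continuousAt.2 fun x => (hGderiv x).continuousAt
  have hDcont : Continuous (Daux g C) :=
    continuous_const.mul (Real.continuous_exp.comp hGcont.neg)
  have hDderiv : ∀ x, HasDerivAt (Daux g C) (-(g x) * Daux g C x) x := by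
    intro x
    have h1 : HasDerivAt (fun y => Real.exp (-(Gaux g y)))
        (Real.exp (-(Gaux g x)) * -(g x)) x := (hGderiv x).neg.exp
    have h2 := h1.const_mul C
    exact h2.congr_deriv (by simp only [Daux]; ring)
  -- bound on G on [-K, K]
  have hGbound : ∀ x : ℝ, |x| ≤ K → |Gaux g x| ≤ gmax * K := by
    intro x hx
    have h1 : |Gaux g x| ≤ gmax * |x - 0| := by
      simp only [Gaux, ← Real.norm_eq_abs]
      exact intervalIntegral.norm_integral_le_of_norm_le_const fun t _ => hgb t
    simp only [sub_zero] at h1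
    exact h1.trans (by nlinarith [abs_nonneg x])
  -- lower bound on G everywhere
  have hGge : ∀ x, δ * |x| - (gmax + δ) * K ≤ Gaux g x := by
    intro x
    rcases le_or_gt |x| K with h | h
    · have h1 := (abs_le.mp (hGbound x h)).1
      nlinarith [mul_nonneg hδ.le (sub_nonneg.mpr h), abs_nonneg x]
    · rcases lt_or_ge K x with hx | hx
      · -- x > K
        have hsplit : Gaux g x = Gaux g K + ∫ t in K..x, g t := by
          simp only [Gaux]
          exact (intervalIntegral.integral_add_adjacent_intervals
            (hg.intervalIntegrable 0 K) (hg.intervalIntegrable K x)).symm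
        have htail : δ * (x - K) ≤ ∫ t in K..x, g t := by
          rw [intervalIntegral.integral_of_le hx.le,
            MeasureTheory.integral_Ioc_eq_integral_Ioo]
          have h2 : δ * (x - K) = ∫ _t in Set.Ioo K x, (δ : ℝ) := by
            rw [setIntegral_const, measureReal_def, Real.volume_Ioo, ENNReal.toReal_ofReal (by linarith),
              smul_eq_mul]
            ring
          rw [h2]
          refine setIntegral_mono_on (integrableOn_const (lt_top_iff_ne_top.1 ?_))
            (hg.integrableOn_Icc.mono_set Set.Ioo_subset_Icc_self) measurableSet_Ioo
            (fun t ht => hpos t ht.1)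
          rw [Real.volume_Ioo]; exact ENNReal.ofReal_lt_top
        have hGK := (abs_le.mp (hGbound K (by rw [abs_of_pos hK]))).1
        have habs : |x| = x := abs_of_pos (hK.trans hx)
        rw [habs]; nlinarith
      · -- x < -K
        have hxneg : x < -K := by
          rcases abs_cases x with ⟨h1, h2⟩ | ⟨h1, h2⟩ <;> linarith
        have hsplit : Gaux g x = Gaux g (-K) - ∫ t in x..(-K), g t := by
          simp only [Gaux]
          rw [← intervalIntegral.integral_add_adjacent_intervals
            (hg.intervalIntegrable 0 x) (hg.intervalIntegrable x (-K))]
          ring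
        have htail : (∫ t in x..(-K), g t) ≤ -δ * (-K - x) := by
          rw [intervalIntegral.integral_of_le hxneg.le,
            MeasureTheory.integral_Ioc_eq_integral_Ioo]
          have h2 : -δ * (-K - x) = ∫ _t in Set.Ioo x (-K), (-δ : ℝ) := by
            rw [setIntegral_const, measureReal_def, Real.volume_Ioo, ENNReal.toReal_ofReal (by linarith),
              smul_eq_mul]
            ring
          rw [h2]
          refine setIntegral_mono_on
            (hg.integrableOn_Icc.mono_set Set.Ioo_subset_Icc_self)
            (integrableOn_const (lt_top_iff_ne_top.1 ?_)) measurableSet_Ioo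
            (fun t ht => hneg t ht.2)
          rw [Real.volume_Ioo]; exact ENNReal.ofReal_lt_top
        have hGK := (abs_le.mp (hGbound (-K) (by rw [abs_neg, abs_of_pos hK]))).1
        have habs : |x| = -x := abs_of_neg (by linarith)
        rw [habs]; nlinarith
  -- pointwise bound on D
  set B0 : ℝ := |C| * Real.exp ((gmax + δ) * K) with hB0
  have hB0nn : 0 ≤ B0 := mul_nonneg (abs_nonneg C) (Real.exp_pos _).le
  have hA : ∀ x, |Daux g C x| ≤ B0 * Real.exp (-(δ * |x|)) := by
    intro x
    have h1 : Real.exp (-(Gaux g x)) ≤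
        Real.exp ((gmax + δ) * K) * Real.exp (-(δ * |x|)) := by
      rw [← Real.exp_add]
      exact Real.exp_le_exp.2 (by linarith [hGge x])
    calc |Daux g C x| = |C| * Real.exp (-(Gaux g x)) := by
          rw [Daux, abs_mul, Real.abs_exp]
      _ ≤ |C| * (Real.exp ((gmax + δ) * K) * Real.exp (-(δ * |x|))) :=
          mul_le_mul_of_nonneg_left h1 (abs_nonneg C)
      _ = B0 * Real.exp (-(δ * |x|)) := by rw [hB0]; ring
  -- integrability of the bound
  have hexp_int : Integrable (fun x : ℝ => Real.exp (-(δ * |x|))) := by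
    have hIoi : IntegrableOn (fun x : ℝ => Real.exp (-(δ * |x|))) (Set.Ioi 0) := by
      refine (exp_neg_integrableOn_Ioi 0 hδ).congr_fun ?_ measurableSet_Ioi
      intro x hx
      show Real.exp (-δ * x) = Real.exp (-(δ * |x|))
      rw [abs_of_pos hx, neg_mul]
    have hIio : IntegrableOn (fun x : ℝ => Real.exp (-(δ * |x|))) (Set.Iio 0) := by
      rw [← (Measure.measurePreserving_neg (volume : Measure ℝ)).integrableOn_comp_preimage
        (Homeomorph.neg ℝ).measurableEmbedding]
      simp only [Function.comp_def, abs_neg, neg_preimage, neg_Iio, neg_zero]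
      exact hIoi
    rw [← integrableOn_univ, ← Set.Iic_union_Ioi (a := (0:ℝ)), integrableOn_union,
      integrableOn_Iic_iff_integrableOn_Iio]
    exact ⟨hIio, hIoi⟩
  have hbound_int : Integrable (fun x : ℝ => B0 * Real.exp (-(δ * |x|))) :=
    hexp_int.const_mul B0
  -- integrability helper
  have key : ∀ (h : ℝ → ℝ) (B : ℝ), Continuous h → (∀ x, |h x| ≤ B) →
      Integrable (fun x => h x * Daux g C x) := by
    intro h B hc hb
    have hBnn : 0 ≤ B := (abs_nonneg (h 0)).trans (hb 0)
    refine (hbound_int.const_mul B).mono'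
      ((hc.mul hDcont).aestronglyMeasurable) ?_
    filter_upwards with x
    calc ‖h x * Daux g C x‖ = |h x| * |Daux g C x| := abs_mul _ _
      _ ≤ B * (B0 * Real.exp (-(δ * |x|))) :=
          mul_le_mul (hb x) (hA x) (abs_nonneg _) hBnn
  -- limits at ±∞
  have hb_top : Tendsto (fun x : ℝ => B0 * Real.exp (-(δ * |x|))) atTop (𝓝 0) := by
    have h1 : Tendsto (fun x : ℝ => -(δ * |x|)) atTop atBot :=
      tendsto_neg_atTop_atBot.comp (tendsto_abs_atTop_atTop.const_mul_atTop hδ)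
    simpa using (Real.tendsto_exp_atBot.comp h1).const_mul B0
  have hb_bot : Tendsto (fun x : ℝ => B0 * Real.exp (-(δ * |x|))) atBot (𝓝 0) := by
    have h1 : Tendsto (fun x : ℝ => -(δ * |x|)) atBot atBot :=
      tendsto_neg_atTop_atBot.comp (tendsto_abs_atBot_atTop.const_mul_atTop hδ)
    simpa using (Real.tendsto_exp_atBot.comp h1).const_mul B0
  have hsq : ∀ (h : ℝ → ℝ), (∀ x, |h x| ≤ 1) →
      Tendsto (fun x => h x * Daux g C x) atTop (𝓝 0) ∧
      Tendsto (fun x => h x * Daux g C x) atBot (𝓝 0) := by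
    intro h hb
    have hbd : ∀ x, ‖h x * Daux g C x‖ ≤ B0 * Real.exp (-(δ * |x|)) := by
      intro x
      calc ‖h x * Daux g C x‖ = |h x| * |Daux g C x| := abs_mul _ _
        _ ≤ 1 * (B0 * Real.exp (-(δ * |x|))) :=
            mul_le_mul (hb x) (hA x) (abs_nonneg _) zero_le_one
        _ = B0 * Real.exp (-(δ * |x|)) := one_mul _
    exact ⟨squeeze_zero_norm hbd hb_top, squeeze_zero_norm hbd hb_bot⟩
  have hcos1 : ∀ x : ℝ, |Real.cos (ω * x)| ≤ 1 := fun x => Real.abs_cos_le_one _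
  have hsin1 : ∀ x : ℝ, |Real.sin (ω * x)| ≤ 1 := fun x => Real.abs_sin_le_one _
  have hccont : Continuous fun x : ℝ => Real.cos (ω * x) :=
    Real.continuous_cos.comp (continuous_const.mul continuous_id)
  have hscont : Continuous fun x : ℝ => Real.sin (ω * x) :=
    Real.continuous_sin.comp (continuous_const.mul continuous_id)
  have hint_s : Integrable (fun x => Real.sin (ω * x) * Daux g C x) := key _ 1 hscont hsin1
  have hint_c : Integrable (fun x => Real.cos (ω * x) * Daux g C x) := key _ 1 hccont hcos1
  have hωx : ∀ x : ℝ, HasDerivAt (fun y : ℝ => ω * y) ω x := by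
    intro x
    simpa using (hasDerivAt_id x).const_mul ω
  constructor
  · -- cosine part
    have hderiv : ∀ x, HasDerivAt (fun x => Real.cos (ω * x) * Daux g C x)
        (-(ω * Real.sin (ω * x)) * Daux g C x
          + Real.cos (ω * x) * (-(g x) * Daux g C x)) x := by
      intro x
      have hc : HasDerivAt (fun x : ℝ => Real.cos (ω * x)) (-(ω * Real.sin (ω * x))) x := by
        have := (Real.hasDerivAt_cos (ω * x)).comp x (hωx x)
        exact this.congr_deriv (by ring)
      exact hc.mul (hDderiv x)
    have hint1 : Integrable (fun x => -(ω * Real.sin (ω * x)) * Daux g C x) := by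
      refine key _ |ω| (by fun_prop) fun x => ?_
      rw [abs_neg, abs_mul]
      calc |ω| * |Real.sin (ω * x)| ≤ |ω| * 1 :=
            mul_le_mul_of_nonneg_left (hsin1 x) (abs_nonneg ω)
        _ = |ω| := mul_one _
    have hint2 : Integrable (fun x => Real.cos (ω * x) * (-(g x) * Daux g C x)) := by
      have := key (fun x => Real.cos (ω * x) * -(g x)) gmax
        (hccont.mul hg.neg) (fun x => by
          rw [abs_mul, abs_neg]
          calc |Real.cos (ω * x)| * |g x| ≤ 1 * gmax :=
              mul_le_mul (hcos1 x) (hgb x) (abs_nonneg _) zero_le_one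
            _ = gmax := one_mul _)
      simpa [mul_assoc] using this
    have hzero : (∫ x : ℝ, (-(ω * Real.sin (ω * x)) * Daux g C x
        + Real.cos (ω * x) * (-(g x) * Daux g C x))) = 0 := by
      have := integral_of_hasDerivAt_of_tendsto hderiv (hint1.add hint2)
        (hsq _ hcos1).2 (hsq _ hcos1).1
      simpa using this
    rw [integral_add hint1 hint2] at hzero
    have e1 : (∫ x : ℝ, -(ω * Real.sin (ω * x)) * Daux g C x)
        = -ω * ∫ x : ℝ, Real.sin (ω * x) * Daux g C x := by
      rw [← integral_const_mul]
      congr 1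
      funext x
      ring
    have e2 : (∫ x : ℝ, Real.cos (ω * x) * (-(g x) * Daux g C x))
        = -∫ x : ℝ, g x * Real.cos (ω * x) * Daux g C x := by
      rw [← integral_neg]
      congr 1
      funext x
      ring
    rw [e1, e2] at hzero
    linarith
  · -- sine part
    have hderiv : ∀ x, HasDerivAt (fun x => Real.sin (ω * x) * Daux g C x)
        ((ω * Real.cos (ω * x)) * Daux g C x
          + Real.sin (ω * x) * (-(g x) * Daux g C x)) x := by
      intro x
      have hc : HasDerivAt (fun x : ℝ => Real.sin (ω * x)) (ω * Real.cos (ω * x)) x := by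
        have := (Real.hasDerivAt_sin (ω * x)).comp x (hωx x)
        exact this.congr_deriv (by ring)
      exact hc.mul (hDderiv x)
    have hint1 : Integrable (fun x => (ω * Real.cos (ω * x)) * Daux g C x) := by
      refine key _ |ω| (by fun_prop) fun x => ?_
      rw [abs_mul]
      calc |ω| * |Real.cos (ω * x)| ≤ |ω| * 1 :=
            mul_le_mul_of_nonneg_left (hcos1 x) (abs_nonneg ω)
        _ = |ω| := mul_one _
    have hint2 : Integrable (fun x => Real.sin (ω * x) * (-(g x) * Daux g C x)) := by
      have := key (fun x => Real.sin (ω * x) * -(g x)) gmax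
        (hscont.mul hg.neg) (fun x => by
          rw [abs_mul, abs_neg]
          calc |Real.sin (ω * x)| * |g x| ≤ 1 * gmax :=
              mul_le_mul (hsin1 x) (hgb x) (abs_nonneg _) zero_le_one
            _ = gmax := one_mul _)
      simpa [mul_assoc] using this
    have hzero : (∫ x : ℝ, ((ω * Real.cos (ω * x)) * Daux g C x
        + Real.sin (ω * x) * (-(g x) * Daux g C x))) = 0 := by
      have := integral_of_hasDerivAt_of_tendsto hderiv (hint1.add hint2)
        (hsq _ hsin1).2 (hsq _ hsin1).1
      simpa using this
    rw [integral_add hint1 hint2] at hzero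
    have e1 : (∫ x : ℝ, (ω * Real.cos (ω * x)) * Daux g C x)
        = ω * ∫ x : ℝ, Real.cos (ω * x) * Daux g C x := by
      rw [← integral_const_mul]
      congr 1
      funext x
      ring
    have e2 : (∫ x : ℝ, Real.sin (ω * x) * (-(g x) * Daux g C x))
        = -∫ x : ℝ, g x * Real.sin (ω * x) * Daux g C x := by
      rw [← integral_neg]
      congr 1
      funext x
      ring
    rw [e1, e2] at hzero
    linarith

/-- The Gibbs distribution with density C·e^{-∫₀ˣ g} satisfies the characteristic-function
functional equation E[e^{jωX} g(X)] = jω E[e^{jωX}], stated via its real and imaginary parts: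
E[g(X)cos(ωX)] = -ω E[sin(ωX)] and E[g(X)sin(ωX)] = ω E[cos(ωX)]. -/
theorem stmt5 (g : ℝ → ℝ) (gmax δ K : ℝ) (hg : Continuous g)
    (hgb : ∀ x, |g x| ≤ gmax) (hδ : 0 < δ) (hK : 0 < K)
    (hpos : ∀ x > K, δ ≤ g x) (hneg : ∀ x < -K, g x ≤ -δ)
    (C : ℝ) (hC : C = (∫ x : ℝ, Real.exp (-(∫ t in (0:ℝ)..x, g t)))⁻¹) (ω : ℝ) :
    (∫ x : ℝ, g x * Real.cos (ω * x) * (C * Real.exp (-(∫ t in (0:ℝ)..x, g t)))) =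
      -ω * ∫ x : ℝ, Real.sin (ω * x) * (C * Real.exp (-(∫ t in (0:ℝ)..x, g t))) ∧
    (∫ x : ℝ, g x * Real.sin (ω * x) * (C * Real.exp (-(∫ t in (0:ℝ)..x, g t)))) =
      ω * ∫ x : ℝ, Real.cos (ω * x) * (C * Real.exp (-(∫ t in (0:ℝ)..x, g t))) :=
  gibbs_main g gmax δ K hg hgb hδ hK hpos hneg C ω
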